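/- arXiv:0712.3650 — 2 statements merged into one kernel-verified Lean document; each statement's English description precedes it below -/
import Mathlib

section
/- For all real t ≠ 0, sinh(t)/t ≤ exp(t²/6); equivalently, the moment generating function of a uniform random variable on [-1,1] is at most exp(t²σ²/2) where σ² = 1/3. -/
open Nat
lemma fact_lb (n : ℕ) : 6 ^ n * n ! ≤ (2 * n + 1)! := by
  induction n with
  | zero => simp
  | succ n ih =>
    have h : 2 * (n + 1) + 1 = (2 * n + 1) + 2 := by ring
    rw [h, Nat.factorial_succ, Nat.factorial_succ, pow_succ, Nat.factorial_succ]
    calc 6 ^ n * 6 * ((n + 1) * n !) = (6 * (n + 1)) * (6 ^ n * n !) := by ring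
      _ ≤ ((2 * n + 2 + 1) * (2 * n + 1 + 1)) * (2 * n + 1)! :=
          Nat.mul_le_mul (by nlinarith) ih
      _ = (2 * n + 2 + 1) * ((2 * n + 1 + 1) * (2 * n + 1)!) := by ring

theorem stmt_3 (t : ℝ) (ht : t ≠ 0) : Real.sinh t / t ≤ Real.exp (t ^ 2 / 6) := by
  have hsinh : HasSum (fun n : ℕ => t ^ (2 * n + 1) / (2 * n + 1)! / t) (Real.sinh t / t) :=
    (Real.hasSum_sinh t).div_const t
  have hexp : HasSum (fun n : ℕ => (t ^ 2 / 6) ^ n / n !) (Real.exp (t ^ 2 / 6)) := by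
    rw [Real.exp_eq_exp_ℝ]
    exact NormedSpace.expSeries_div_hasSum_exp (t ^ 2 / 6)
  refine hasSum_le (fun n => ?_) hsinh hexp
  have h1 : t ^ (2 * n + 1) / (2 * n + 1)! / t = (t ^ 2) ^ n / (2 * n + 1)! := by
    rw [← pow_mul]
    field_simp
    ring
  have h2 : (t ^ 2 / 6) ^ n / n ! = (t ^ 2) ^ n / (6 ^ n * n !) := by
    rw [div_pow]
    field_simp
  rw [h1, h2]
  apply div_le_div_of_nonneg_left (by positivity) (by positivity)
  exact_mod_cast fact_lb n
end

section
/- Let X be a random variable with E[X] = 0, Var(X) = 1, and moment generating function φ(t) = E[exp(tX)] satisfying φ(t) ≤ exp(t²/2) for all real t. Let X₁,…,X_k be i.i.d. copies of X, let x ∈ ℝ^k with Σ x_j² = 1, and let S = Σ_j x_j X_j. Then for all 0 ≤ t < 1/2, E[exp(t S²)] ≤ 1/√(1-2t). -/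
open MeasureTheory ProbabilityTheory Finset

lemma gauss_real (a b : ℝ) (ha : 0 < a) :
    ∫ z : ℝ, Real.exp (-a * z ^ 2 + b * z)
      = Real.sqrt (Real.pi / a) * Real.exp (b ^ 2 / (4 * a)) := by
  have h : ∀ z : ℝ, -a * z ^ 2 + b * z = -a * (z - b / (2 * a)) ^ 2 + b ^ 2 / (4 * a) := by
    intro z; field_simp; ring
  simp_rw [h, Real.exp_add, integral_mul_const]
  rw [integral_sub_right_eq_self (fun z => Real.exp (-a * z ^ 2)) (b / (2 * a)), integral_gaussian]

lemma gauss_int (a b : ℝ) (ha : 0 < a) :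
    Integrable (fun z : ℝ => Real.exp (-a * z ^ 2 + b * z)) := by
  have h := (integrable_exp_neg_mul_sq ha).comp_sub_right (b / (2 * a))
  have h2 := h.const_mul (Real.exp (b ^ 2 / (4 * a)))
  refine h2.congr (Filter.Eventually.of_forall fun z => ?_)
  simp only [← Real.exp_add]
  congr 1
  field_simp; ring

lemma gauss_lintegral (b c : ℝ) (hc : c < 1 / 2) :
    ∫⁻ z, ENNReal.ofReal (Real.exp (b * z + c * z ^ 2)) ∂(gaussianReal 0 1)
      = ENNReal.ofReal ((Real.sqrt (1 - 2 * c))⁻¹ * Real.exp (b ^ 2 / (2 * (1 - 2 * c)))) := by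
  have ha : (0 : ℝ) < 1 / 2 - c := by linarith
  rw [gaussianReal_of_var_ne_zero 0 one_ne_zero,
    lintegral_withDensity_eq_lintegral_mul _ (measurable_gaussianPDF 0 1) (by fun_prop)]
  have hpt : ∀ z : ℝ, (gaussianPDF 0 1 * fun z => ENNReal.ofReal (Real.exp (b * z + c * z ^ 2))) z
      = ENNReal.ofReal ((Real.sqrt (2 * Real.pi))⁻¹
          * Real.exp (-(1 / 2 - c) * z ^ 2 + b * z)) := by
    intro z
    simp only [Pi.mul_apply, gaussianPDF_def, gaussianPDFReal, NNReal.coe_one, mul_one, sub_zero]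
    rw [← ENNReal.ofReal_mul (by positivity)]
    congr 1
    rw [mul_assoc, ← Real.exp_add]
    congr 1
    ring
  simp_rw [hpt]
  rw [← ofReal_integral_eq_lintegral_ofReal
      ((gauss_int _ b ha).const_mul _)
      (Filter.Eventually.of_forall fun z => by positivity)]
  rw [integral_const_mul, gauss_real _ b ha]
  congr 1
  have h1 : Real.pi / (1 / 2 - c) = 2 * Real.pi / (1 - 2 * c) := by field_simp
  have h2 : b ^ 2 / (4 * (1 / 2 - c)) = b ^ 2 / (2 * (1 - 2 * c)) := by ring_nf
  rw [h1, Real.sqrt_div (by positivity), h2]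
  have h3 : Real.sqrt (2 * Real.pi) ≠ 0 := by positivity
  have h4 : Real.sqrt (1 - 2 * c) ≠ 0 := (Real.sqrt_pos.mpr (by linarith)).ne'
  field_simp

theorem stmt_8 {Ω : Type*} [MeasurableSpace Ω] (μ : Measure Ω) [IsProbabilityMeasure μ]
    (k : ℕ) (ξ : Ω → ℝ) (X : Fin k → Ω → ℝ)
    (hmeas : ∀ j, Measurable (X j))
    (hindep : iIndepFun X μ)
    (hid : ∀ j, IdentDistrib (X j) ξ μ μ)
    (hmean : ∫ ω, ξ ω ∂μ = 0) (hvar : variance ξ μ = 1)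
    (hmgf : ∀ t : ℝ, mgf ξ μ t ≤ Real.exp (t ^ 2 / 2))
    (x : Fin k → ℝ) (hx : ∑ j, x j ^ 2 = 1)
    (t : ℝ) (ht0 : 0 ≤ t) (ht : t < 1 / 2) :
    ∫ ω, Real.exp (t * (∑ j, x j * X j ω) ^ 2) ∂μ ≤ 1 / Real.sqrt (1 - 2 * t) := by
  classical
  have hRHSpos : (0 : ℝ) < Real.sqrt (1 - 2 * t) := Real.sqrt_pos.mpr (by linarith)
  set S : Ω → ℝ := fun ω => ∑ j, x j * X j ω with hS_def
  have hSmeas : Measurable S := by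
    apply Finset.measurable_sum
    exact fun j _ => (hmeas j).const_mul _
  -- the scaled variables
  set Y : Fin k → Ω → ℝ := fun j => (fun v => x j * v) ∘ X j with hY_def
  have hYmeas : ∀ j, Measurable (Y j) := fun j => (hmeas j).const_mul _
  have hYindep : iIndepFun Y μ :=
    hindep.comp (fun j v => x j * v) (fun j => measurable_const_mul _)
  have hSsum : S = ∑ j, Y j := by
    funext ω; simp [hS_def, hY_def, Finset.sum_apply]
  rcases ht0.eq_or_lt with h0 | htpos
  · subst h0
    simp only [zero_mul, Real.exp_zero, integral_const, measure_univ, probReal_univ, ENNReal.toReal_one,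
      smul_eq_mul, mul_one, mul_zero, sub_zero, Real.sqrt_one]
    norm_num
  by_cases hInt : ∀ s : ℝ, Integrable (fun ω => Real.exp (s * ξ ω)) μ
  · -- main case : all exponential moments exist
    set c : ℝ := Real.sqrt (2 * t) with hc_def
    have hc2 : c ^ 2 = 2 * t := Real.sq_sqrt (by linarith)
    have hIntX : ∀ (j : Fin k) (s : ℝ), Integrable (fun ω => Real.exp (s * X j ω)) μ := by
      intro j s
      exact ((hid j).comp (Real.measurable_exp.comp (measurable_const_mul s))).integrable_iff.mpr
        (hInt s)
    have hmgfX : ∀ (j : Fin k) (s : ℝ), mgf (X j) μ s = mgf ξ μ s := by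
      intro j s
      exact ((hid j).comp (Real.measurable_exp.comp (measurable_const_mul s))).integral_eq
    have hIntY : ∀ (j : Fin k) (s : ℝ), Integrable (fun ω => Real.exp (s * Y j ω)) μ := by
      intro j s
      have := hIntX j (s * x j)
      refine this.congr (Filter.Eventually.of_forall fun ω => ?_)
      simp only [hY_def, Function.comp_apply]
      ring_nf
    have hIntS : ∀ s : ℝ, Integrable (fun ω => Real.exp (s * S ω)) μ := by
      intro s
      have h := hYindep.integrable_exp_mul_sum hYmeas
        (s := Finset.univ) (fun j _ => hIntY j s)
      rw [hSsum]
      exact h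
    have hmgfS : ∀ s : ℝ, mgf S μ s ≤ Real.exp (s ^ 2 / 2) := by
      intro s
      rw [hSsum, hYindep.mgf_sum hYmeas]
      calc ∏ j, mgf (Y j) μ s ≤ ∏ j : Fin k, Real.exp ((s * x j) ^ 2 / 2) := by
            refine Finset.prod_le_prod (fun j _ => mgf_nonneg) (fun j _ => ?_)
            have hYX : mgf (Y j) μ s = mgf (X j) μ (s * x j) := by
              simp only [mgf]
              congr 1
              funext ω
              simp only [hY_def, Function.comp_apply]
              ring_nf
            rw [hYX, hmgfX j]
            exact hmgf (s * x j)
        _ = Real.exp (∑ j : Fin k, (s * x j) ^ 2 / 2) := (Real.exp_sum _ _).symm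
        _ = Real.exp (s ^ 2 / 2) := by
            congr 1
            have : ∑ j : Fin k, (s * x j) ^ 2 / 2 = s ^ 2 / 2 * ∑ j, x j ^ 2 := by
              rw [Finset.mul_sum]
              exact Finset.sum_congr rfl fun j _ => by ring
            rw [this, hx, mul_one]
    -- pass to lintegrals
    have key1 : ∀ ω : Ω, ENNReal.ofReal (Real.exp (t * S ω ^ 2))
        = ∫⁻ z, ENNReal.ofReal (Real.exp ((c * S ω) * z)) ∂(gaussianReal 0 1) := by
      intro ω
      have := gauss_lintegral (c * S ω) 0 (by norm_num)
      simp only [mul_zero, sub_zero, Real.sqrt_one, inv_one, one_mul, zero_mul, add_zero,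
        mul_one] at this
      rw [this]
      congr 2
      rw [mul_pow, hc2]
      ring
    have hswap : ∫⁻ ω, ∫⁻ z, ENNReal.ofReal (Real.exp ((c * S ω) * z)) ∂(gaussianReal 0 1) ∂μ
        = ∫⁻ z, ∫⁻ ω, ENNReal.ofReal (Real.exp ((c * S ω) * z)) ∂μ ∂(gaussianReal 0 1) := by
      apply lintegral_lintegral_swap
      apply Measurable.aemeasurable
      exact (((hSmeas.comp measurable_fst).const_mul c).mul measurable_snd).exp.ennreal_ofReal
    have key3 : ∀ z : ℝ, ∫⁻ ω, ENNReal.ofReal (Real.exp ((c * S ω) * z)) ∂μ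
        = ENNReal.ofReal (mgf S μ (c * z)) := by
      intro z
      have h1 : ∫⁻ ω, ENNReal.ofReal (Real.exp ((c * S ω) * z)) ∂μ
          = ∫⁻ ω, ENNReal.ofReal (Real.exp ((c * z) * S ω)) ∂μ :=
        lintegral_congr fun ω => by rw [mul_right_comm]
      rw [h1, ← ofReal_integral_eq_lintegral_ofReal (hIntS (c * z))
        (Filter.Eventually.of_forall fun ω => (Real.exp_pos _).le)]
      rfl
    have hmain : ∫⁻ ω, ENNReal.ofReal (Real.exp (t * S ω ^ 2)) ∂μ
        ≤ ENNReal.ofReal (1 / Real.sqrt (1 - 2 * t)) := by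
      calc ∫⁻ ω, ENNReal.ofReal (Real.exp (t * S ω ^ 2)) ∂μ
          = ∫⁻ z, ∫⁻ ω, ENNReal.ofReal (Real.exp ((c * S ω) * z)) ∂μ ∂(gaussianReal 0 1) := by
            rw [← hswap]; exact lintegral_congr key1
        _ = ∫⁻ z, ENNReal.ofReal (mgf S μ (c * z)) ∂(gaussianReal 0 1) := lintegral_congr key3
        _ ≤ ∫⁻ z, ENNReal.ofReal (Real.exp (0 * z + t * z ^ 2)) ∂(gaussianReal 0 1) := by
            refine lintegral_mono fun z => ENNReal.ofReal_le_ofReal ?_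
            refine (hmgfS (c * z)).trans (le_of_eq ?_)
            congr 1
            rw [mul_pow, hc2]
            ring
        _ = ENNReal.ofReal ((Real.sqrt (1 - 2 * t))⁻¹ * Real.exp (0 ^ 2 / (2 * (1 - 2 * t)))) :=
            gauss_lintegral 0 t ht
        _ = ENNReal.ofReal (1 / Real.sqrt (1 - 2 * t)) := by
            norm_num
    rw [integral_eq_lintegral_of_nonneg_ae
      (Filter.Eventually.of_forall fun ω => (Real.exp_pos _).le)
      ((hSmeas.pow_const 2).const_mul t).exp.aestronglyMeasurable]
    exact ENNReal.toReal_le_of_le_ofReal (by positivity) hmain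
  · -- degenerate case : some exponential moment infinite, integrand not integrable
    push_neg at hInt
    obtain ⟨s0, hs0⟩ := hInt
    have hj0 : ∃ j : Fin k, x j ≠ 0 := by
      by_contra h
      push_neg at h
      simp [h] at hx
    obtain ⟨j0, hxj0⟩ := hj0
    set s : ℝ := s0 / x j0 with hs_def
    have hni : ¬ Integrable (fun ω => Real.exp (t * S ω ^ 2)) μ := by
      intro hI
      have hIntsS : Integrable (fun ω => Real.exp (s * S ω)) μ := by
        refine Integrable.mono' (hI.const_mul (Real.exp (s ^ 2 / (4 * t))))
          ((hSmeas.const_mul s).exp.aestronglyMeasurable)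
          (Filter.Eventually.of_forall fun ω => ?_)
        rw [Real.norm_of_nonneg (Real.exp_pos _).le, ← Real.exp_add]
        apply Real.exp_le_exp.mpr
        rw [← sub_nonneg]
        have h5 : s ^ 2 / (4 * t) + t * S ω ^ 2 - s * S ω
            = (2 * t * S ω - s) ^ 2 / (4 * t) := by field_simp; ring
        rw [h5]
        positivity
      set R : Ω → ℝ := fun ω => ∑ j ∈ Finset.univ.erase j0, Y j ω with hR_def
      have hRmeas : Measurable R := by
        apply Finset.measurable_sum
        exact fun j _ => hYmeas j
      have hsplit : ∀ ω, S ω = Y j0 ω + R ω := by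
        intro ω
        rw [hSsum, hR_def]
        simp only [Finset.sum_apply]
        exact (Finset.add_sum_erase _ _ (Finset.mem_univ j0)).symm
      have hindep2 : IndepFun (Y j0) R μ := by
        have h := hYindep.indepFun_finsetSum_of_notMem hYmeas
          (Finset.notMem_erase j0 Finset.univ)
        have hR : R = ∑ j ∈ Finset.univ.erase j0, Y j := by
          funext ω; simp [hR_def, Finset.sum_apply]
        rw [hR]
        exact h.symm
      have hindep3 : IndepFun (fun ω => Real.exp (s * Y j0 ω)) (fun ω => Real.exp (s * R ω)) μ :=
        hindep2.comp (Real.measurable_exp.comp (measurable_const_mul s))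
          (Real.measurable_exp.comp (measurable_const_mul s))
      have hprod : (fun ω => Real.exp (s * Y j0 ω)) * (fun ω => Real.exp (s * R ω))
          = fun ω => Real.exp (s * S ω) := by
        funext ω
        simp only [Pi.mul_apply, ← Real.exp_add]
        congr 1
        rw [hsplit ω]
        ring
      have hne0 : ¬ (fun ω => Real.exp (s * R ω)) =ᵐ[μ] 0 := by
        intro h
        haveI : (ae μ).NeBot := ae_neBot.mpr (IsProbabilityMeasure.ne_zero μ)
        obtain ⟨ω, hω⟩ := h.exists
        exact (Real.exp_pos _).ne' hω
      have hIntY0 : Integrable (fun ω => Real.exp (s * Y j0 ω)) μ :=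
        hindep3.integrable_left_of_integrable_op (· * ·) 1 one_ne_zero
          (fun x y => by simp [enorm_mul]) (by rw [← hprod] at hIntsS; exact hIntsS)
          ((hYmeas j0).const_mul s).exp.aestronglyMeasurable
          (hRmeas.const_mul s).exp.aestronglyMeasurable hne0
      have hIntX0 : Integrable (fun ω => Real.exp (s0 * X j0 ω)) μ := by
        refine hIntY0.congr (Filter.Eventually.of_forall fun ω => ?_)
        simp only [hY_def, Function.comp_apply]
        rw [← mul_assoc, hs_def, div_mul_cancel₀ _ hxj0]
      exact hs0 (((hid j0).comp
        (Real.measurable_exp.comp (measurable_const_mul s0))).integrable_iff.mp hIntX0)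
    rw [integral_undef hni]
    positivity
end
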